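/- Let d ≥ 1, let ϑ : ℝ^d → ℂ be a Schwartz function, and let v ∈ ℝ^d. Then for every t > 0 and x ∈ ℝ^d, the wavepacket Ψ_v satisfies i ∂_t Ψ_v(t,x) + Δ_x Ψ_v(t,x) = e^{i|x|²/(4t)} [ i ((x − 2vt)/(2 t^{3/2})) · (∇ϑ)((x − 2tv)/t^{1/2}) + (i d/(2t)) ϑ((x − 2tv)/t^{1/2}) + (1/t) (Δϑ)((x − 2tv)/t^{1/2}) ]; in particular Ψ_v solves the linear Schrödinger equation up to an error which is a factor 1/t smaller than the wavepacket itself. -/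

import Mathlib

open MeasureTheory

/-- The wavepacket with velocity `v`: `Ψ_v(t,x) = e^{i|x|²/(4t)} ϑ((x − 2tv)/t^{1/2})`. -/
noncomputable def wavePacket {d : ℕ} (ϑ : SchwartzMap (EuclideanSpace ℝ (Fin d)) ℂ)
    (v : EuclideanSpace ℝ (Fin d)) (t : ℝ) (x : EuclideanSpace ℝ (Fin d)) : ℂ :=
  Complex.exp (Complex.I * ((‖x‖ ^ 2 / (4 * t) : ℝ) : ℂ)) *
    ϑ ((Real.sqrt t)⁻¹ • (x - (2 * t) • v))

/-- The `j`-th partial derivative of a complex-valued function on `ℝ^d`. -/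
noncomputable def pderiv' {d : ℕ} (f : EuclideanSpace ℝ (Fin d) → ℂ)
    (j : Fin d) (x : EuclideanSpace ℝ (Fin d)) : ℂ :=
  fderiv ℝ f x (EuclideanSpace.single j 1)

/-- The Laplacian of a complex-valued function on `ℝ^d`. -/
noncomputable def lap' {d : ℕ} (f : EuclideanSpace ℝ (Fin d) → ℂ)
    (x : EuclideanSpace ℝ (Fin d)) : ℂ :=
  ∑ j : Fin d, pderiv' (pderiv' f j) j x

open Complex

variable {d : ℕ}

namespace SchwartzMap

/-- The partial derivative in direction `m` on Schwartz space (compatibility wrapper). -/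
noncomputable def pderivCLM (𝕜 : Type*) [RCLike 𝕜] {E F : Type*} [NormedAddCommGroup E]
    [NormedSpace ℝ E] [NormedAddCommGroup F] [NormedSpace ℝ F] [NormedSpace 𝕜 F]
    [SMulCommClass ℝ 𝕜 F] (m : E) : 𝓢(E, F) →L[𝕜] 𝓢(E, F) :=
  LineDeriv.lineDerivOpCLM 𝕜 𝓢(E, F) m

theorem pderivCLM_apply (𝕜 : Type*) [RCLike 𝕜] {E F : Type*} [NormedAddCommGroup E]
    [NormedSpace ℝ E] [NormedAddCommGroup F] [NormedSpace ℝ F] [NormedSpace 𝕜 F]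
    [SMulCommClass ℝ 𝕜 F] (m : E) (f : 𝓢(E, F)) (x : E) :
    pderivCLM 𝕜 m f x = fderiv ℝ f x m := rfl

end SchwartzMap

lemma euclid_decomp (w : EuclideanSpace ℝ (Fin d)) :
    ∑ j : Fin d, w j • EuclideanSpace.single j (1:ℝ) = w := by
  classical
  simpa using (EuclideanSpace.basisFun (Fin d) ℝ).sum_repr w

lemma clm_apply_sum (L : EuclideanSpace ℝ (Fin d) →L[ℝ] ℂ) (w : EuclideanSpace ℝ (Fin d)) :
    L w = ∑ j : Fin d, ((w j : ℝ) : ℂ) * L (EuclideanSpace.single j 1) := by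
  conv_lhs => rw [← euclid_decomp w]
  rw [map_sum]
  exact Finset.sum_congr rfl fun j _ => by rw [_root_.map_smul]; simp [Complex.real_smul]

noncomputable def GG (t : ℝ) (z : EuclideanSpace ℝ (Fin d)) : ℂ :=
  Complex.exp (Complex.I * ((‖z‖ ^ 2 / (4 * t) : ℝ) : ℂ))

noncomputable def DG (t : ℝ) (z : EuclideanSpace ℝ (Fin d)) :
    EuclideanSpace ℝ (Fin d) →L[ℝ] ℂ :=
  GG t z • (Complex.I • (Complex.ofRealCLM.comp ((4 * t)⁻¹ • (2 • (innerSL ℝ z)))))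

lemma hasFDerivAt_GG (t : ℝ) (z : EuclideanSpace ℝ (Fin d)) :
    HasFDerivAt (GG (d := d) t) (DG t z) z := by
  have h1 : HasFDerivAt (fun z : EuclideanSpace ℝ (Fin d) => ‖z‖ ^ 2)
      (2 • (innerSL ℝ z)) z := (hasStrictFDerivAt_norm_sq z).hasFDerivAt
  have h2 := h1.const_mul ((4 * t)⁻¹)
  have h3 := Complex.ofRealCLM.hasFDerivAt.comp z h2
  have h4 := h3.const_mul Complex.I
  have h5 := h4.cexp
  have : (fun z : EuclideanSpace ℝ (Fin d) =>
      Complex.exp (Complex.I * ((((4 * t)⁻¹ * ‖z‖ ^ 2 : ℝ)) : ℂ))) = GG (d := d) t := by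
    funext z; rw [GG, div_eq_inv_mul]
  rw [← this]
  refine h5.congr_fderiv ?_
  simp [DG, GG, div_eq_inv_mul, Function.comp]

lemma DG_apply (t : ℝ) (ht : 0 < t) (j : Fin d) (z : EuclideanSpace ℝ (Fin d)) :
    DG t z (EuclideanSpace.single j 1)
      = Complex.I * ((z j / (2 * t) : ℝ) : ℂ) * GG t z := by
  have hz : (innerSL ℝ z) (EuclideanSpace.single j 1) = z j := by
    simp [EuclideanSpace.inner_single_right]
  simp only [DG, ContinuousLinearMap.smul_apply, ContinuousLinearMap.comp_apply,
    Complex.ofRealCLM_apply, hz, smul_eq_mul, nsmul_eq_mul]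
  push_cast
  field_simp
  ring

noncomputable def yy (v : EuclideanSpace ℝ (Fin d)) (t : ℝ)
    (z : EuclideanSpace ℝ (Fin d)) : EuclideanSpace ℝ (Fin d) :=
  (Real.sqrt t)⁻¹ • (z - (2 * t) • v)

lemma hasFDerivAt_yy (v : EuclideanSpace ℝ (Fin d)) (t : ℝ) (z : EuclideanSpace ℝ (Fin d)) :
    HasFDerivAt (yy v t)
      ((Real.sqrt t)⁻¹ • (ContinuousLinearMap.id ℝ (EuclideanSpace ℝ (Fin d)))) z :=
  ((hasFDerivAt_id z).sub_const ((2 * t) • v)).const_smul (Real.sqrt t)⁻¹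

lemma hasFDerivAt_comp_yy (f : SchwartzMap (EuclideanSpace ℝ (Fin d)) ℂ)
    (v : EuclideanSpace ℝ (Fin d)) (t : ℝ) (z : EuclideanSpace ℝ (Fin d)) :
    HasFDerivAt (fun z => f (yy v t z))
      ((Real.sqrt t)⁻¹ • fderiv ℝ f (yy v t z)) z := by
  have h := (f.differentiableAt (x := yy v t z)).hasFDerivAt.comp z (hasFDerivAt_yy v t z)
  refine h.congr_fderiv ?_
  ext w
  simp

@[simp] lemma eproj_apply (j : Fin d) (z : EuclideanSpace ℝ (Fin d)) :
    (EuclideanSpace.proj (𝕜 := ℝ) j) z = z j := rfl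

noncomputable def PP (ϑ : SchwartzMap (EuclideanSpace ℝ (Fin d)) ℂ)
    (v : EuclideanSpace ℝ (Fin d)) (t : ℝ) (j : Fin d)
    (z : EuclideanSpace ℝ (Fin d)) : ℂ :=
  GG t z * (Complex.I * (((2 * t)⁻¹ * z j : ℝ) : ℂ) * ϑ (yy v t z)
    + (((Real.sqrt t)⁻¹ : ℝ) : ℂ) *
        (SchwartzMap.pderivCLM ℝ (EuclideanSpace.single j 1) ϑ) (yy v t z))

lemma pderiv_wavePacket (ϑ : SchwartzMap (EuclideanSpace ℝ (Fin d)) ℂ)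
    (v : EuclideanSpace ℝ (Fin d)) {t : ℝ} (ht : 0 < t) (j : Fin d)
    (z : EuclideanSpace ℝ (Fin d)) :
    pderiv' (wavePacket ϑ v t) j z = PP ϑ v t j z := by
  have hW : HasFDerivAt (wavePacket ϑ v t)
      (GG t z • ((Real.sqrt t)⁻¹ • fderiv ℝ ϑ (yy v t z)) + ϑ (yy v t z) • DG t z) z := by
    have := (hasFDerivAt_GG t z).mul (hasFDerivAt_comp_yy ϑ v t z)
    exact this
  rw [pderiv', hW.fderiv]
  simp only [ContinuousLinearMap.add_apply, ContinuousLinearMap.smul_apply,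
    ContinuousLinearMap.coe_smul', Pi.smul_apply, DG_apply t ht j z,
    SchwartzMap.pderivCLM_apply, PP, Complex.real_smul, smul_eq_mul]
  push_cast
  field_simp
  ring

lemma pderiv2_wavePacket (ϑ : SchwartzMap (EuclideanSpace ℝ (Fin d)) ℂ)
    (v : EuclideanSpace ℝ (Fin d)) {t : ℝ} (ht : 0 < t) (j : Fin d)
    (x : EuclideanSpace ℝ (Fin d)) :
    pderiv' (pderiv' (wavePacket ϑ v t) j) j x
      = GG t x *
        (Complex.I * (((2 * t)⁻¹ * x j : ℝ) : ℂ) * (Complex.I * (((2 * t)⁻¹ * x j : ℝ) : ℂ))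
              * ϑ (yy v t x)
          + Complex.I * (((2 * t)⁻¹ : ℝ) : ℂ) * ϑ (yy v t x)
          + 2 * (Complex.I * (((2 * t)⁻¹ * x j : ℝ) : ℂ)) * (((Real.sqrt t)⁻¹ : ℝ) : ℂ) *
              (SchwartzMap.pderivCLM ℝ (EuclideanSpace.single j 1) ϑ) (yy v t x)
          + (((Real.sqrt t)⁻¹ : ℝ) : ℂ) * (((Real.sqrt t)⁻¹ : ℝ) : ℂ) *
              (SchwartzMap.pderivCLM ℝ (EuclideanSpace.single j 1)
                (SchwartzMap.pderivCLM ℝ (EuclideanSpace.single j 1) ϑ)) (yy v t x)) := by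
  have hfe : pderiv' (wavePacket ϑ v t) j = PP ϑ v t j :=
    funext fun z => pderiv_wavePacket ϑ v ht j z
  rw [hfe]
  set θ1 := SchwartzMap.pderivCLM ℝ (EuclideanSpace.single j (1:ℝ)) ϑ with hθ1
  have hcoord : HasFDerivAt
      (fun z : EuclideanSpace ℝ (Fin d) => Complex.I * (((2 * t)⁻¹ * z j : ℝ) : ℂ))
      (Complex.I • (Complex.ofRealCLM.comp
        ((2 * t)⁻¹ • (EuclideanSpace.proj (𝕜 := ℝ) j)))) x := by
    have h0 : HasFDerivAt (fun z : EuclideanSpace ℝ (Fin d) => z j)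
        (EuclideanSpace.proj (𝕜 := ℝ) j) x :=
      (EuclideanSpace.proj (𝕜 := ℝ) j).hasFDerivAt.congr_of_eventuallyEq
        (Filter.Eventually.of_forall fun z => rfl)
    have h1 := h0.const_mul ((2 * t)⁻¹)
    have h2 := Complex.ofRealCLM.hasFDerivAt.comp x h1
    have h3 := h2.const_mul Complex.I
    refine h3.congr_fderiv ?_
    ext w
    simp
  have hϑc := hasFDerivAt_comp_yy ϑ v t x
  have hθc := hasFDerivAt_comp_yy θ1 v t x
  have hmul := hcoord.mul hϑc
  have hc2 := hθc.const_mul ((((Real.sqrt t)⁻¹ : ℝ) : ℂ))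
  have hsum := hmul.add hc2
  have hPP := (hasFDerivAt_GG t x).mul hsum
  have hPP' : HasFDerivAt (PP ϑ v t j) _ x := hPP
  rw [pderiv', hPP'.fderiv]
  simp only [ContinuousLinearMap.add_apply, ContinuousLinearMap.smul_apply,
    ContinuousLinearMap.coe_smul', Pi.smul_apply, ContinuousLinearMap.comp_apply,
    Complex.ofRealCLM_apply, eproj_apply, DG_apply t ht j x,
    SchwartzMap.pderivCLM_apply, Complex.real_smul, smul_eq_mul,
    EuclideanSpace.single_apply, if_pos rfl, Pi.mul_apply, Pi.add_apply]
  have hfd : (fderiv ℝ (⇑ϑ) (yy v t x)) (EuclideanSpace.single j 1) = θ1 (yy v t x) :=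
    (SchwartzMap.pderivCLM_apply ℝ (EuclideanSpace.single j 1) ϑ (yy v t x)).symm
  rw [hfd]
  push_cast
  ring

lemma deriv_wavePacket (ϑ : SchwartzMap (EuclideanSpace ℝ (Fin d)) ℂ)
    (v : EuclideanSpace ℝ (Fin d)) {t : ℝ} (ht : 0 < t) (x : EuclideanSpace ℝ (Fin d)) :
    deriv (fun s => wavePacket ϑ v s x) t
      = GG t x * ((Complex.I * ((-(‖x‖ ^ 2 / (4 * t ^ 2)) : ℝ) : ℂ)) * ϑ (yy v t x)
          + ∑ j : Fin d,
            (((-(1 / (2 * t * Real.sqrt t)) * (x j - 2 * t * v j)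
                - (Real.sqrt t)⁻¹ * (2 * v j)) : ℝ) : ℂ) *
              (SchwartzMap.pderivCLM ℝ (EuclideanSpace.single j 1) ϑ) (yy v t x)) := by
  have hst : Real.sqrt t ≠ 0 := by positivity
  have hph : HasDerivAt (fun s : ℝ => ‖x‖ ^ 2 / (4 * s)) (-(‖x‖ ^ 2 / (4 * t ^ 2))) t := by
    have h := (hasDerivAt_const t (‖x‖ ^ 2)).div ((hasDerivAt_id t).const_mul 4)
      (by positivity)
    refine h.congr_deriv ?_
    rw [id]
    field_simp
    ring
  have hexp := (hph.ofReal_comp.const_mul Complex.I).cexp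
  have hinv : HasDerivAt (fun s : ℝ => (Real.sqrt s)⁻¹) (-(1 / (2 * t * Real.sqrt t))) t := by
    have h := (Real.hasDerivAt_sqrt (ne_of_gt ht)).inv hst
    refine h.congr_deriv ?_
    rw [Real.sq_sqrt ht.le]
    field_simp
  have hu : HasDerivAt (fun s : ℝ => x - (2 * s) • v) (-((2 : ℝ) • v)) t := by
    have h := (hasDerivAt_const t x).sub (((hasDerivAt_id t).const_mul 2).smul_const v)
    refine h.congr_deriv ?_
    simp
  have hg := hinv.smul hu
  have hϑd := (ϑ.differentiableAt (x := yy v t x)).hasFDerivAt.comp_hasDerivAt t hg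
  have hW := hexp.mul hϑd
  have hval := hW.deriv
  simp only [Function.comp_def, Pi.mul_def, Pi.smul_apply'] at hval
  have heq : deriv (fun s => wavePacket ϑ v s x) t
      = deriv (fun s => Complex.exp (Complex.I * ((‖x‖ ^ 2 / (4 * s) : ℝ) : ℂ)) *
          ϑ ((Real.sqrt s)⁻¹ • (x - (2 * s) • v))) t := rfl
  rw [heq, hval]
  set g' := (Real.sqrt t)⁻¹ • (-((2 : ℝ) • v))
      + (-(1 / (2 * t * Real.sqrt t))) • (x - (2 * t) • v) with hg'
  have happ : (fderiv ℝ (⇑ϑ) (yy v t x)) g'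
      = ∑ j : Fin d,
        (((-(1 / (2 * t * Real.sqrt t)) * (x j - 2 * t * v j)
            - (Real.sqrt t)⁻¹ * (2 * v j)) : ℝ) : ℂ) *
          (SchwartzMap.pderivCLM ℝ (EuclideanSpace.single j 1) ϑ) (yy v t x) := by
    rw [clm_apply_sum]
    refine Finset.sum_congr rfl fun j _ => ?_
    have hgj : g' j = -(1 / (2 * t * Real.sqrt t)) * (x j - 2 * t * v j)
        - (Real.sqrt t)⁻¹ * (2 * v j) := by
      rw [hg']
      simp [PiLp.add_apply, PiLp.smul_apply, PiLp.sub_apply, PiLp.neg_apply, smul_eq_mul]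
      ring
    rw [hgj, SchwartzMap.pderivCLM_apply]
  rw [happ]
  rw [GG, yy]
  ring


set_option maxHeartbeats 2000000 in
/-- The wavepacket solves the linear Schrödinger equation up to an error a factor
`1/t` smaller than the wavepacket itself. -/
theorem stmt0 (d : ℕ) (hd : 1 ≤ d) (ϑ : SchwartzMap (EuclideanSpace ℝ (Fin d)) ℂ)
    (v : EuclideanSpace ℝ (Fin d)) (t : ℝ) (ht : 0 < t) (x : EuclideanSpace ℝ (Fin d)) :
    Complex.I * deriv (fun s => wavePacket ϑ v s x) t + lap' (wavePacket ϑ v t) x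
      = Complex.exp (Complex.I * ((‖x‖ ^ 2 / (4 * t) : ℝ) : ℂ)) *
        (Complex.I * ∑ j : Fin d,
            (((x j - 2 * v j * t) / (2 * t ^ ((3 : ℝ) / 2)) : ℝ) : ℂ) *
              pderiv' (fun y => ϑ y) j ((Real.sqrt t)⁻¹ • (x - (2 * t) • v))
          + Complex.I * (d : ℂ) / (2 * t) * ϑ ((Real.sqrt t)⁻¹ • (x - (2 * t) • v))
          + (1 / (t : ℂ)) * lap' (fun y => ϑ y) ((Real.sqrt t)⁻¹ • (x - (2 * t) • v))) := by
  have hst : Real.sqrt t ≠ 0 := by positivity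
  have htne : t ≠ 0 := ne_of_gt ht
  have hp1 : ∀ (j : Fin d) (z' : EuclideanSpace ℝ (Fin d)),
      pderiv' (fun y => ϑ y) j z'
        = (SchwartzMap.pderivCLM ℝ (EuclideanSpace.single j 1) ϑ) z' := by
    intro j z'
    simp only [pderiv', SchwartzMap.pderivCLM_apply]
  have hfun : ∀ j : Fin d, pderiv' (fun y => ϑ y) j
      = ⇑(SchwartzMap.pderivCLM ℝ (EuclideanSpace.single j 1) ϑ) := fun j =>
    funext fun z' => hp1 j z'
  have hp2 : ∀ (j : Fin d) (z' : EuclideanSpace ℝ (Fin d)),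
      pderiv' (pderiv' (fun y => ϑ y) j) j z'
        = (SchwartzMap.pderivCLM ℝ (EuclideanSpace.single j 1)
            (SchwartzMap.pderivCLM ℝ (EuclideanSpace.single j 1) ϑ)) z' := by
    intro j z'
    rw [hfun j]
    simp only [pderiv', SchwartzMap.pderivCLM_apply]
  have hyy : (Real.sqrt t)⁻¹ • (x - (2 * t) • v) = yy v t x := rfl
  have hGG : Complex.exp (Complex.I * ((‖x‖ ^ 2 / (4 * t) : ℝ) : ℂ)) = GG t x := rfl
  rw [deriv_wavePacket ϑ v ht x, hyy, hGG]
  simp only [lap']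
  simp only [pderiv2_wavePacket ϑ v ht, hp1, hp2]
  have hnorm : ‖x‖ ^ 2 = ∑ j : Fin d, x j ^ 2 := by
    rw [EuclideanSpace.norm_eq, Real.sq_sqrt (by positivity)]
    simp [Real.norm_eq_abs, sq_abs]
  have hst2 : Real.sqrt t * Real.sqrt t = t := Real.mul_self_sqrt ht.le
  have hsp : ((-(‖x‖ ^ 2 / (4 * t ^ 2)) : ℝ) : ℂ)
      = ∑ j : Fin d, ((-((2 * t)⁻¹ * x j * ((2 * t)⁻¹ * x j)) : ℝ) : ℂ) := by
    have hr : -(‖x‖ ^ 2 / (4 * t ^ 2))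
        = ∑ j : Fin d, -((2 * t)⁻¹ * x j * ((2 * t)⁻¹ * x j)) := by
      rw [hnorm, Finset.sum_div, ← Finset.sum_neg_distrib]
      refine Finset.sum_congr rfl fun j _ => ?_
      field_simp
      ring
    rw [hr]
    push_cast
    rfl
  have hdd : Complex.I * (d : ℂ) / (2 * (t : ℂ)) * ϑ (yy v t x)
      = ∑ _j : Fin d, Complex.I / (2 * (t : ℂ)) * ϑ (yy v t x) := by
    rw [Finset.sum_const, Finset.card_univ, Fintype.card_fin, nsmul_eq_mul]
    ring
  have h32 : t ^ ((3 : ℝ) / 2) = t * Real.sqrt t := by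
    rw [show (3 : ℝ) / 2 = 1 + 1 / 2 by ring, Real.rpow_add ht, Real.rpow_one,
      ← Real.sqrt_eq_rpow]
  have hcoef : ∀ j : Fin d, ((x j - 2 * v j * t) / (2 * t ^ ((3 : ℝ) / 2)) : ℝ)
      = (-(1 / (2 * t * Real.sqrt t)) * (x j - 2 * t * v j)
          - (Real.sqrt t)⁻¹ * (2 * v j)) + 2 * ((2 * t)⁻¹ * x j) * (Real.sqrt t)⁻¹ := by
    intro j
    rw [h32]
    field_simp
    ring
  have haa : (((Real.sqrt t)⁻¹ : ℝ) : ℂ) * (((Real.sqrt t)⁻¹ : ℝ) : ℂ) = 1 / (t : ℂ) := by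
    push_cast
    rw [← mul_inv]
    norm_cast
    rw [hst2, inv_eq_one_div]
  rw [hsp, hdd]
  simp only [hcoef, haa]
  simp only [mul_add, add_mul, Finset.mul_sum, Finset.sum_mul, Finset.sum_add_distrib]
  simp only [← Finset.sum_add_distrib]
  refine Finset.sum_congr rfl fun j _ => ?_
  push_cast
  ring
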